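/- arXiv:1308.4105 — 2 statements merged into one kernel-verified Lean document; each statement's English description precedes it below -/
import Mathlib

section
/- Let R be a local ring and s a central element of R lying in J(R). For A ∈ M₂(R;s), if Aⁿ ∈ J(M₂(R;s)) for some natural number n ≥ 1, then A ∈ J(M₂(R;s)). -/
/-- The formal matrix ring `M₂(R;s)`: 2×2 matrices over `R` recorded by their four
entries, with the twisted multiplication
`[[a,b],[c,d]]·[[a',b'],[c',d']] = [[aa'+s²bc', ab'+bd'],[ca'+dc', s²cb'+dd']]`. -/
@[ext]
structure FM (R : Type*) (s : R) : Type _ where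
  a : R
  b : R
  c : R
  d : R

namespace FM

variable {R : Type*} [Ring R] {s : R}

instance : Zero (FM R s) := ⟨⟨0, 0, 0, 0⟩⟩
instance : One (FM R s) := ⟨⟨1, 0, 0, 1⟩⟩
instance : Add (FM R s) := ⟨fun x y => ⟨x.a + y.a, x.b + y.b, x.c + y.c, x.d + y.d⟩⟩
instance : Neg (FM R s) := ⟨fun x => ⟨-x.a, -x.b, -x.c, -x.d⟩⟩
instance : Mul (FM R s) :=
  ⟨fun x y => ⟨x.a * y.a + s * s * (x.b * y.c), x.a * y.b + x.b * y.d,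
    x.c * y.a + x.d * y.c, s * s * (x.c * y.b) + x.d * y.d⟩⟩

@[simp] lemma zero_a : (0 : FM R s).a = 0 := rfl
@[simp] lemma zero_b : (0 : FM R s).b = 0 := rfl
@[simp] lemma zero_c : (0 : FM R s).c = 0 := rfl
@[simp] lemma zero_d : (0 : FM R s).d = 0 := rfl
@[simp] lemma one_a : (1 : FM R s).a = 1 := rfl
@[simp] lemma one_b : (1 : FM R s).b = 0 := rfl
@[simp] lemma one_c : (1 : FM R s).c = 0 := rfl
@[simp] lemma one_d : (1 : FM R s).d = 1 := rfl
@[simp] lemma add_a (x y : FM R s) : (x + y).a = x.a + y.a := rfl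
@[simp] lemma add_b (x y : FM R s) : (x + y).b = x.b + y.b := rfl
@[simp] lemma add_c (x y : FM R s) : (x + y).c = x.c + y.c := rfl
@[simp] lemma add_d (x y : FM R s) : (x + y).d = x.d + y.d := rfl
@[simp] lemma neg_a (x : FM R s) : (-x).a = -x.a := rfl
@[simp] lemma neg_b (x : FM R s) : (-x).b = -x.b := rfl
@[simp] lemma neg_c (x : FM R s) : (-x).c = -x.c := rfl
@[simp] lemma neg_d (x : FM R s) : (-x).d = -x.d := rfl
@[simp] lemma mul_a (x y : FM R s) : (x * y).a = x.a * y.a + s * s * (x.b * y.c) := rfl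
@[simp] lemma mul_b (x y : FM R s) : (x * y).b = x.a * y.b + x.b * y.d := rfl
@[simp] lemma mul_c (x y : FM R s) : (x * y).c = x.c * y.a + x.d * y.c := rfl
@[simp] lemma mul_d (x y : FM R s) : (x * y).d = s * s * (x.c * y.b) + x.d * y.d := rfl

instance : AddCommGroup (FM R s) where
  add_assoc x y z := by ext <;> simp [add_assoc]
  zero_add x := by ext <;> simp
  add_zero x := by ext <;> simp
  add_comm x y := by ext <;> simp [add_comm]
  neg_add_cancel x := by ext <;> simp
  nsmul := nsmulRec
  zsmul := zsmulRec

/-- When `s` is central in `R`, `M₂(R;s)` is a ring. -/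
instance [hs : Fact (∀ x : R, s * x = x * s)] : Ring (FM R s) where
  __ := (inferInstance : AddCommGroup (FM R s))
  mul := (· * ·)
  one := 1
  mul_assoc x y z := by
    have hc : ∀ u v : R, u * (s * v) = s * (u * v) := fun u v => by
      rw [← mul_assoc, ← hs.out u, mul_assoc]
    ext <;> simp only [mul_a, mul_b, mul_c, mul_d, mul_add, add_mul, mul_assoc, hc] <;> abel
  one_mul x := by ext <;> simp
  mul_one x := by ext <;> simp
  left_distrib x y z := by ext <;> simp [mul_add, add_mul] <;> abel
  right_distrib x y z := by ext <;> simp [mul_add, add_mul] <;> abel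
  zero_mul x := by ext <;> simp
  mul_zero x := by ext <;> simp

/-- In a commutative ring every element is central. -/
instance (priority := 100) {R : Type*} [CommRing R] (s : R) : Fact (∀ x : R, s * x = x * s) :=
  ⟨fun x => mul_comm s x⟩

end FM

/-- An element is strongly J-clean if it is the sum of an idempotent and an element of
the Jacobson radical which commute. -/
def IsStronglyJClean {A : Type*} [Ring A] (x : A) : Prop :=
  ∃ e : A, IsIdempotentElem e ∧ x * e = e * x ∧ x - e ∈ (⊥ : Ideal A).jacobson

/-- An element is strongly clean if it is the sum of an idempotent and a unit
which commute. -/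
def IsStronglyClean {A : Type*} [Ring A] (x : A) : Prop :=
  ∃ e : A, IsIdempotentElem e ∧ x * e = e * x ∧ IsUnit (x - e)

/-- An element is strongly nil clean if it is the sum of an idempotent and a nilpotent
which commute. -/
def IsStronglyNilClean {A : Type*} [Ring A] (x : A) : Prop :=
  ∃ e : A, IsIdempotentElem e ∧ x * e = e * x ∧ IsNilpotent (x - e)

section LocalHelpers

variable {R : Type*} [Ring R] [IsLocalRing R]

lemma units_of_mul_eq_one' {a b : R} (h : a * b = 1) : IsUnit a ∧ IsUnit b := by
  have he2 : (b * a) * (b * a) = b * a := by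
    rw [mul_assoc, ← mul_assoc a b a, h, one_mul]
  rcases IsLocalRing.isUnit_or_isUnit_of_add_one (a := b * a) (b := 1 - b * a)
      (by abel) with he | he
  · have hba : b * a = 1 := he.mul_left_cancel (by rw [he2, mul_one])
    exact ⟨⟨⟨a, b, h, hba⟩, rfl⟩, ⟨⟨b, a, hba, h⟩, rfl⟩⟩
  · exfalso
    have hid : (1 - b * a) * (1 - b * a) = (1 - b * a) * 1 := by
      rw [mul_one]
      simp only [sub_mul, mul_sub, one_mul, mul_one, he2]
      abel
    have h1 : 1 - b * a = 1 := he.mul_left_cancel hid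
    have hba0 : b * a = 0 := sub_eq_self.mp h1
    have : (1 : R) = 0 := by
      calc (1 : R) = (a * b) * (a * b) := by rw [h, one_mul]
        _ = a * ((b * a) * b) := by rw [mul_assoc, ← mul_assoc b a b]
        _ = 0 := by rw [hba0, zero_mul, mul_zero]
    exact one_ne_zero this

lemma nonunit_mul_left' {a : R} (h : ¬ IsUnit a) (r : R) : ¬ IsUnit (r * a) := by
  rintro ⟨u, hu⟩
  refine h (units_of_mul_eq_one' (a := (↑u⁻¹ : R) * r) (b := a) ?_).2
  rw [mul_assoc, ← hu, u.inv_mul]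

lemma nonunit_mul_right' {a : R} (h : ¬ IsUnit a) (r : R) : ¬ IsUnit (a * r) := by
  rintro ⟨u, hu⟩
  refine h (units_of_mul_eq_one' (a := a) (b := r * (↑u⁻¹ : R)) ?_).1
  rw [← mul_assoc, ← hu, u.mul_inv]

lemma nonunit_add' {a b : R} (ha : ¬ IsUnit a) (hb : ¬ IsUnit b) : ¬ IsUnit (a + b) := by
  rintro ⟨u, hu⟩
  have h1 : a * (↑u⁻¹ : R) + b * (↑u⁻¹ : R) = 1 := by
    rw [← add_mul, ← hu, u.mul_inv]
  rcases IsLocalRing.isUnit_or_isUnit_of_add_one h1 with h | h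
  · have := h.mul u.isUnit
    rw [Units.inv_mul_cancel_right] at this
    exact ha this
  · have := h.mul u.isUnit
    rw [Units.inv_mul_cancel_right] at this
    exact hb this

lemma isUnit_one_add' {j : R} (hj : ¬ IsUnit j) : IsUnit (1 + j) :=
  (IsLocalRing.isUnit_or_isUnit_of_add_one (a := 1 + j) (b := -j) (by abel)).resolve_right
    (by simpa using hj)

lemma isUnit_one_sub' {j : R} (hj : ¬ IsUnit j) : IsUnit (1 - j) := by
  have := isUnit_one_add' (j := -j) (by simpa using hj)
  rwa [← sub_eq_add_neg] at this

lemma mem_jacobson_bot_iff_nonunit {x : R} :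
    x ∈ (⊥ : Ideal R).jacobson ↔ ¬ IsUnit x := by
  constructor
  · intro hx hu
    have htop : (⊥ : Ideal R).jacobson = ⊤ := Ideal.eq_top_of_isUnit_mem _ hx hu
    have : (⊥ : Ideal R) = ⊤ := Ideal.jacobson_eq_top_iff.mp htop
    exact one_ne_zero ((Ideal.mem_bot).mp (this ▸ Submodule.mem_top : (1 : R) ∈ (⊥ : Ideal R)))
  · intro hx
    rw [Ideal.mem_jacobson_iff]
    intro y
    have hyu : IsUnit (y * x + 1) := by
      have := isUnit_one_add' (nonunit_mul_left' hx y)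
      rwa [add_comm] at this
    obtain ⟨u, hu⟩ := hyu
    refine ⟨(↑u⁻¹ : R), ?_⟩
    have h2 : (↑u⁻¹ : R) * (y * x + 1) = 1 := by rw [← hu, u.inv_mul]
    rw [mul_add, mul_one] at h2
    rw [Ideal.mem_bot, sub_eq_zero, mul_assoc]
    exact h2

end LocalHelpers

namespace FM

variable {R : Type*} [Ring R] {s : R} [Fact (∀ x : R, s * x = x * s)] [IsLocalRing R]

lemma hc1 (x y : R) : x * (s * y) = s * (x * y) := by
  have h := (Fact.out (p := ∀ x : R, s * x = x * s)) x
  rw [← mul_assoc, ← h, mul_assoc]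

lemma hc2 (x y : R) : x * (s * s * y) = s * s * (x * y) := by
  calc x * (s * s * y) = x * (s * (s * y)) := by rw [mul_assoc]
    _ = s * (x * (s * y)) := hc1 x (s * y)
    _ = s * (s * (x * y)) := by rw [hc1 x y]
    _ = s * s * (x * y) := by rw [mul_assoc]

lemma nonunit_s2 (hs : ¬ IsUnit s) (x : R) : ¬ IsUnit (s * s * x) :=
  nonunit_mul_right' (nonunit_mul_right' hs s) x

/-- If the diagonal entries of `w` are units, then `w` has a left inverse. -/
lemma exists_left_inv (hs : ¬ IsUnit s) {w : FM R s}
    (ha : IsUnit w.a) (hd : IsUnit w.d) : ∃ z : FM R s, z * w = 1 := by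
  obtain ⟨ua, hua⟩ := ha
  obtain ⟨ud, hud⟩ := hd
  set va : R := (↑ua⁻¹ : R) with hva
  set vd : R := (↑ud⁻¹ : R) with hvd
  have hva1 : va * w.a = 1 := by rw [hva, ← hua, ua.inv_mul]
  have hva2 : w.a * va = 1 := by rw [hva, ← hua, ua.mul_inv]
  have hvd1 : vd * w.d = 1 := by rw [hvd, ← hud, ud.inv_mul]
  have hvd2 : w.d * vd = 1 := by rw [hvd, ← hud, ud.mul_inv]
  -- the two "Schur complements"
  set α : R := w.a - s * s * (w.b * (vd * w.c)) with hαdef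
  set δ : R := w.d - s * s * (w.c * (va * w.b)) with hδdef
  have hαu : IsUnit α := by
    have h1 : IsUnit (1 - va * (s * s * (w.b * (vd * w.c)))) :=
      isUnit_one_sub' (nonunit_mul_left' (nonunit_s2 hs _) va)
    have h2 : w.a * (1 - va * (s * s * (w.b * (vd * w.c)))) = α := by
      rw [mul_sub, mul_one, ← mul_assoc, hva2, one_mul]
    exact h2 ▸ IsUnit.mul ⟨ua, hua⟩ h1
  have hδu : IsUnit δ := by
    have h1 : IsUnit (1 - vd * (s * s * (w.c * (va * w.b)))) :=
      isUnit_one_sub' (nonunit_mul_left' (nonunit_s2 hs _) vd)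
    have h2 : w.d * (1 - vd * (s * s * (w.c * (va * w.b)))) = δ := by
      rw [mul_sub, mul_one, ← mul_assoc, hvd2, one_mul]
    exact h2 ▸ IsUnit.mul ⟨ud, hud⟩ h1
  obtain ⟨uα, huα⟩ := hαu
  obtain ⟨uδ, huδ⟩ := hδu
  set vα : R := (↑uα⁻¹ : R) with hvα
  set vδ : R := (↑uδ⁻¹ : R) with hvδ
  have hvα1 : vα * α = 1 := by rw [hvα, ← huα, uα.inv_mul]
  have hvδ1 : vδ * δ = 1 := by rw [hvδ, ← huδ, uδ.inv_mul]
  refine ⟨⟨vα, -(vα * (w.b * vd)), -(vδ * (w.c * va)), vδ⟩, ?_⟩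
  ext
  · show vα * w.a + s * s * (-(vα * (w.b * vd)) * w.c) = 1
    calc vα * w.a + s * s * (-(vα * (w.b * vd)) * w.c)
        = vα * w.a - s * s * (vα * (w.b * (vd * w.c))) := by
          rw [neg_mul, mul_neg, ← sub_eq_add_neg, mul_assoc vα (w.b * vd) w.c,
            mul_assoc w.b vd w.c]
      _ = vα * w.a - vα * (s * s * (w.b * (vd * w.c))) := by rw [hc2]
      _ = vα * α := by rw [hαdef, mul_sub]
      _ = 1 := hvα1
  · show vα * w.b + -(vα * (w.b * vd)) * w.d = 0
    rw [neg_mul, ← sub_eq_add_neg, mul_assoc vα, mul_assoc w.b, hvd1, mul_one, sub_self]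
  · show -(vδ * (w.c * va)) * w.a + vδ * w.c = 0
    rw [neg_mul, mul_assoc vδ, mul_assoc w.c, hva1, mul_one, neg_add_cancel]
  · show s * s * (-(vδ * (w.c * va)) * w.b) + vδ * w.d = 1
    calc s * s * (-(vδ * (w.c * va)) * w.b) + vδ * w.d
        = vδ * w.d - s * s * (vδ * (w.c * (va * w.b))) := by
          rw [neg_mul, mul_neg, mul_assoc vδ (w.c * va) w.b, mul_assoc w.c va w.b]
          abel
      _ = vδ * w.d - vδ * (s * s * (w.c * (va * w.b))) := by rw [hc2]
      _ = vδ * δ := by rw [hδdef, mul_sub]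
      _ = 1 := hvδ1

lemma mem_jacobson_of_nonunits (hs : ¬ IsUnit s) {x : FM R s}
    (ha : ¬ IsUnit x.a) (hd : ¬ IsUnit x.d) :
    x ∈ (⊥ : Ideal (FM R s)).jacobson := by
  rw [Ideal.mem_jacobson_iff]
  intro y
  have hwa : IsUnit ((y * x + 1).a) := by
    have h1 : ¬ IsUnit (y.a * x.a + s * s * (y.b * x.c)) :=
      nonunit_add' (nonunit_mul_left' ha y.a) (nonunit_s2 hs _)
    have := isUnit_one_add' h1
    rw [add_comm] at this
    simpa using this
  have hwd : IsUnit ((y * x + 1).d) := by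
    have h1 : ¬ IsUnit (s * s * (y.c * x.b) + y.d * x.d) :=
      nonunit_add' (nonunit_s2 hs _) (nonunit_mul_left' hd y.d)
    have := isUnit_one_add' h1
    rw [add_comm] at this
    simpa using this
  obtain ⟨z, hz⟩ := exists_left_inv hs hwa hwd
  refine ⟨z, ?_⟩
  rw [Ideal.mem_bot, sub_eq_zero, ← hz, mul_add, mul_one, mul_assoc]

lemma nonunit_a_of_mem_jacobson {x : FM R s}
    (h : x ∈ (⊥ : Ideal (FM R s)).jacobson) : ¬ IsUnit x.a := by
  rintro ⟨u, hu⟩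
  obtain ⟨z, hz⟩ := Ideal.mem_jacobson_iff.mp h ⟨-(↑u⁻¹ : R), 0, 0, 0⟩
  rw [Ideal.mem_bot] at hz
  have hv : (↑u⁻¹ : R) * x.a = 1 := by rw [← hu, u.inv_mul]
  have h0 := congrArg FM.a hz
  rw [sub_eq_add_neg] at h0
  simp only [add_a, neg_a, mul_a, mul_b, one_a, zero_a] at h0
  simp only [mul_zero, mul_neg, add_zero, zero_mul, neg_mul, mul_assoc, hv, mul_one] at h0
  -- h0 : -z.a + z.a + -1 = 0  (roughly)
  have : (-1 : R) = 0 := by linear_combination (norm := abel) h0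
  exact one_ne_zero (neg_eq_zero.mp this)

lemma nonunit_d_of_mem_jacobson {x : FM R s}
    (h : x ∈ (⊥ : Ideal (FM R s)).jacobson) : ¬ IsUnit x.d := by
  rintro ⟨u, hu⟩
  obtain ⟨z, hz⟩ := Ideal.mem_jacobson_iff.mp h ⟨0, 0, 0, -(↑u⁻¹ : R)⟩
  rw [Ideal.mem_bot] at hz
  have hv : (↑u⁻¹ : R) * x.d = 1 := by rw [← hu, u.inv_mul]
  have h0 := congrArg FM.d hz
  rw [sub_eq_add_neg] at h0
  simp only [add_d, neg_d, mul_d, mul_c, one_d, zero_d, zero_c, zero_b] at h0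
  simp only [mul_zero, mul_neg, add_zero, zero_add, zero_mul, neg_mul, mul_assoc, hv,
    mul_one] at h0
  have : (-1 : R) = 0 := by linear_combination (norm := abel) h0
  exact one_ne_zero (neg_eq_zero.mp this)

lemma pow_entries_nonunit_diff (hs : ¬ IsUnit s) (A : FM R s) (k : ℕ) :
    ¬ IsUnit ((A ^ (k + 1)).a - A.a ^ (k + 1)) ∧
      ¬ IsUnit ((A ^ (k + 1)).d - A.d ^ (k + 1)) := by
  induction k with
  | zero => simp [isUnit_zero_iff, (zero_ne_one (α := R))]
  | succ k ih =>
    have hpow : A ^ (k + 2) = A ^ (k + 1) * A := pow_succ A (k + 1)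
    constructor
    · have heq : (A ^ (k + 2)).a - A.a ^ (k + 2) =
          ((A ^ (k + 1)).a - A.a ^ (k + 1)) * A.a + s * s * ((A ^ (k + 1)).b * A.c) := by
        rw [hpow, mul_a, sub_mul, pow_succ A.a (k + 1)]
        abel
      rw [heq]
      exact nonunit_add' (nonunit_mul_right' ih.1 A.a) (nonunit_s2 hs _)
    · have heq : (A ^ (k + 2)).d - A.d ^ (k + 2) =
          ((A ^ (k + 1)).d - A.d ^ (k + 1)) * A.d + s * s * ((A ^ (k + 1)).c * A.b) := by
        rw [hpow, mul_d, sub_mul, pow_succ A.d (k + 1)]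
        abel
      rw [heq]
      exact nonunit_add' (nonunit_mul_right' ih.2 A.d) (nonunit_s2 hs _)

end FM

theorem stmt8 {R : Type*} [Ring R] [IsLocalRing R] (s : R)
    [Fact (∀ x : R, s * x = x * s)] (hsJ : s ∈ (⊥ : Ideal R).jacobson)
    (A : FM R s) (n : ℕ) (hn : 1 ≤ n) (h : A ^ n ∈ (⊥ : Ideal (FM R s)).jacobson) :
    A ∈ (⊥ : Ideal (FM R s)).jacobson := by
  have hs : ¬ IsUnit s := mem_jacobson_bot_iff_nonunit.mp hsJ
  obtain ⟨k, rfl⟩ : ∃ k, n = k + 1 := ⟨n - 1, by omega⟩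
  have hna : ¬ IsUnit ((A ^ (k + 1)).a) := FM.nonunit_a_of_mem_jacobson h
  have hnd : ¬ IsUnit ((A ^ (k + 1)).d) := FM.nonunit_d_of_mem_jacobson h
  obtain ⟨hda, hdd⟩ := FM.pow_entries_nonunit_diff hs A k
  have hpa : ¬ IsUnit (A.a ^ (k + 1)) := by
    have := nonunit_add' hna ((not_congr (IsUnit.neg_iff _)).mpr hda)
    rwa [show (A ^ (k + 1)).a + -((A ^ (k + 1)).a - A.a ^ (k + 1)) = A.a ^ (k + 1) by abel]
      at this
  have hpd : ¬ IsUnit (A.d ^ (k + 1)) := by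
    have := nonunit_add' hnd ((not_congr (IsUnit.neg_iff _)).mpr hdd)
    rwa [show (A ^ (k + 1)).d + -((A ^ (k + 1)).d - A.d ^ (k + 1)) = A.d ^ (k + 1) by abel]
      at this
  exact FM.mem_jacobson_of_nonunits hs (fun hu => hpa (hu.pow _)) (fun hu => hpd (hu.pow _))
end

section
/- Let R be a local ring and s a central element of R with s ∈ J(R). Every non-trivial idempotent E of M₂(R;s) is similar either to [[1,0],[0,0]] or to [[0,0],[0,1]]. -/
section LocalAux

variable {R : Type*} [Ring R] [IsLocalRing R]

theorem locOr (a : R) : IsUnit a ∨ IsUnit (1 - a) :=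
  IsLocalRing.isUnit_or_isUnit_of_add_one (add_sub_cancel a 1)

theorem locOneSub {a : R} (h : ¬ IsUnit a) : IsUnit (1 - a) :=
  (locOr a).resolve_left h

theorem locOfLeftInv {t x : R} (h : t * x = 1) : IsUnit x := by
  have he : (x * t) * (x * t) = x * t := by
    rw [mul_assoc, ← mul_assoc t x, h, one_mul]
  rcases locOr (x * t) with hu | hu
  · have h1 : x * t = 1 := hu.mul_left_cancel (by rw [he, mul_one])
    exact ⟨⟨x, t, h1, h⟩, rfl⟩
  · have h0 : x * t = 0 := by
      have : (1 - x * t) * (x * t) = (1 - x * t) * 0 := by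
        rw [sub_mul, one_mul, he, sub_self, mul_zero]
      exact hu.mul_left_cancel this
    have : (1 : R) = 0 := by
      calc (1:R) = (t * x) * (t * x) := by rw [h, one_mul]
        _ = t * (x * t) * x := by rw [mul_assoc, mul_assoc, mul_assoc]
        _ = 0 := by rw [h0, mul_zero, zero_mul]
    exact ⟨⟨x, t, by rw [h0, this], h⟩, rfl⟩

theorem locOfRightInv {t x : R} (h : x * t = 1) : IsUnit x := by
  have he : (t * x) * (t * x) = t * x := by
    rw [mul_assoc, ← mul_assoc x t, h, one_mul]
  rcases locOr (t * x) with hu | hu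
  · have h1 : t * x = 1 := hu.mul_left_cancel (by rw [he, mul_one])
    exact ⟨⟨x, t, h, h1⟩, rfl⟩
  · have h0 : t * x = 0 := by
      have : (1 - t * x) * (t * x) = (1 - t * x) * 0 := by
        rw [sub_mul, one_mul, he, sub_self, mul_zero]
      exact hu.mul_left_cancel this
    have : (1 : R) = 0 := by
      calc (1:R) = (x * t) * (x * t) := by rw [h, one_mul]
        _ = x * (t * x) * t := by rw [mul_assoc, mul_assoc, mul_assoc]
        _ = 0 := by rw [h0, mul_zero, zero_mul]
    exact ⟨⟨x, t, h, by rw [h0, this]⟩, rfl⟩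

theorem locNonunitMulR {x : R} (hx : ¬ IsUnit x) (y : R) : ¬ IsUnit (y * x) := by
  rintro ⟨u, hu⟩
  exact hx (locOfLeftInv (show (↑u⁻¹ * y) * x = 1 by rw [mul_assoc, ← hu, u.inv_mul]))

theorem sNonunit {s : R} (hsJ : s ∈ (⊥ : Ideal R).jacobson) : ¬ IsUnit s := by
  intro hs
  obtain ⟨M, hM⟩ := Ideal.exists_maximal R
  have hsM : s ∈ M := (Ideal.mem_sInf.mp hsJ) ⟨bot_le, hM⟩
  exact hM.ne_top (M.eq_top_of_isUnit_mem hsM hs)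

end LocalAux

namespace FM

section FMAux

variable {R : Type*} [Ring R] {s : R}

lemma sub_a (x y : FM R s) : (x - y).a = x.a - y.a := by
  rw [sub_eq_add_neg, sub_eq_add_neg]; rfl

lemma sub_b (x y : FM R s) : (x - y).b = x.b - y.b := by
  rw [sub_eq_add_neg, sub_eq_add_neg]; rfl

lemma sub_c (x y : FM R s) : (x - y).c = x.c - y.c := by
  rw [sub_eq_add_neg, sub_eq_add_neg]; rfl

lemma sub_d (x y : FM R s) : (x - y).d = x.d - y.d := by
  rw [sub_eq_add_neg, sub_eq_add_neg]; rfl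

variable [Fact (∀ x : R, s * x = x * s)]

lemma isUnit_upper (t : R) : IsUnit (FM.mk 1 t 0 1 : FM R s) :=
  ⟨⟨FM.mk 1 t 0 1, FM.mk 1 (-t) 0 1, by ext <;> simp, by ext <;> simp⟩, rfl⟩

lemma isUnit_lower (r : R) : IsUnit (FM.mk 1 0 r 1 : FM R s) :=
  ⟨⟨FM.mk 1 0 r 1, FM.mk 1 0 (-r) 1, by ext <;> simp, by ext <;> simp⟩, rfl⟩

lemma isUnit_diag {p w : R} (hp : IsUnit p) (hw : IsUnit w) :
    IsUnit (FM.mk p 0 0 w : FM R s) := by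
  obtain ⟨P, hP⟩ := hp; obtain ⟨W, hW⟩ := hw
  exact ⟨⟨FM.mk p 0 0 w, FM.mk ↑P⁻¹ 0 0 ↑W⁻¹,
    by ext <;> simp [← hP, ← hW], by ext <;> simp [← hP, ← hW]⟩, rfl⟩

theorem isUnit_of_diag [IsLocalRing R] (hs : ¬ IsUnit s) (x : FM R s)
    (ha : IsUnit x.a) (hd : IsUnit x.d) : IsUnit x := by
  have hcs : ∀ y : R, s * y = y * s := Fact.out
  obtain ⟨p, hp⟩ := ha
  have hL : ∀ z : R, x.a * ((↑p⁻¹ : R) * z) = z := fun z => by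
    rw [← mul_assoc, ← hp, p.mul_inv, one_mul]
  have hR : (↑p⁻¹ : R) * x.a = 1 := by rw [← hp, p.inv_mul]
  have hR' : ∀ z : R, (↑p⁻¹ : R) * (x.a * z) = z := fun z => by
    rw [← mul_assoc, hR, one_mul]
  set k : R := x.c * ((↑p⁻¹ : R) * x.b) with hk
  have hw : IsUnit (x.d - s * s * k) := by
    obtain ⟨d, hdd⟩ := hd
    have key2 : (↑d : R) * ((↑d⁻¹ : R) * (s * k) * s) = s * s * k := by
      rw [mul_assoc (↑d⁻¹ : R), ← mul_assoc (↑d : R), d.mul_inv, one_mul,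
        ← hcs (s * k), ← mul_assoc]
    have hform : x.d - s * s * k = ↑d * (1 - ((↑d⁻¹ : R) * (s * k)) * s) := by
      rw [mul_sub, mul_one, key2, hdd]
    rw [hform]
    exact d.isUnit.mul (locOneSub (locNonunitMulR hs _))
  have hx : x = FM.mk 1 0 (x.c * (↑p⁻¹ : R)) 1 *
      (FM.mk x.a 0 0 (x.d - s * s * k) * FM.mk 1 ((↑p⁻¹ : R) * x.b) 0 1) := by
    ext <;> simp [mul_assoc, hL, hR, hR', hk]
  rw [hx]
  exact (isUnit_lower _).mul ((isUnit_diag ⟨p, hp⟩ hw).mul (isUnit_upper _))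

end FMAux

end FM

section ConjAux

theorem conjKey {A : Type*} [Ring A] {e f : A} (he : e * e = e) (hf : f * f = f) :
    e * (e * f + (1 - e) * (1 - f)) = (e * f + (1 - e) * (1 - f)) * f := by
  have h1 : e * (1 - e) = 0 := by rw [mul_sub, mul_one, he, sub_self]
  have h2 : (1 - f) * f = 0 := by rw [sub_mul, one_mul, hf, sub_self]
  rw [mul_add, add_mul, ← mul_assoc e e f, he, ← mul_assoc e (1 - e) (1 - f), h1, zero_mul,
    add_zero, mul_assoc e f f, hf, mul_assoc (1 - e) (1 - f) f, h2, mul_zero, add_zero]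

theorem conjEx {A : Type*} [Ring A] {e f : A} (he : e * e = e) (hf : f * f = f)
    (hu : IsUnit (e * f + (1 - e) * (1 - f))) :
    ∃ u : Aˣ, ((u⁻¹ : Aˣ) : A) * e * (u : A) = f := by
  obtain ⟨u, hu'⟩ := hu
  refine ⟨u, ?_⟩
  have h : e * (u : A) = (u : A) * f := by rw [hu']; exact conjKey he hf
  calc ((u⁻¹ : Aˣ) : A) * e * (u : A) = ((u⁻¹ : Aˣ) : A) * (e * (u : A)) := by rw [mul_assoc]
    _ = ((u⁻¹ : Aˣ) : A) * ((u : A) * f) := by rw [h]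
    _ = (((u⁻¹ : Aˣ) : A) * (u : A)) * f := by rw [mul_assoc]
    _ = f := by rw [u.inv_mul, one_mul]

end ConjAux

theorem stmt11 {R : Type*} [Ring R] [IsLocalRing R] (s : R)
    [Fact (∀ x : R, s * x = x * s)] (hsJ : s ∈ (⊥ : Ideal R).jacobson)
    (E : FM R s) (hE : IsIdempotentElem E) (h0 : E ≠ 0) (h1 : E ≠ 1) :
    (∃ u : (FM R s)ˣ, ((u⁻¹ : (FM R s)ˣ) : FM R s) * E * (u : FM R s) = FM.mk 1 0 0 0) ∨
    (∃ u : (FM R s)ˣ, ((u⁻¹ : (FM R s)ˣ) : FM R s) * E * (u : FM R s) = FM.mk 0 0 0 1) := by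
  have hs : ¬ IsUnit s := sNonunit hsJ
  have hE' : E * E = E := hE
  by_cases ha : IsUnit E.a <;> by_cases hd : IsUnit E.d
  · -- both diagonal entries units: E is a unit, hence E = 1
    exact absurd ((FM.isUnit_of_diag hs E ha hd).mul_left_cancel
      (show E * E = E * 1 by rw [mul_one]; exact hE')) h1
  · -- a unit, d not
    left
    have hF : (FM.mk 1 0 0 0 : FM R s) * FM.mk 1 0 0 0 = FM.mk 1 0 0 0 := by ext <;> simp
    apply conjEx hE' hF
    have huval : E * FM.mk 1 0 0 0 + (1 - E) * (1 - FM.mk 1 0 0 0) =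
        FM.mk E.a (-E.b) E.c (1 - E.d) := by
      ext <;> simp [FM.sub_a, FM.sub_b, FM.sub_c, FM.sub_d]
    rw [huval]
    exact FM.isUnit_of_diag hs _ ha (locOneSub hd)
  · -- d unit, a not
    right
    have hG : (FM.mk 0 0 0 1 : FM R s) * FM.mk 0 0 0 1 = FM.mk 0 0 0 1 := by ext <;> simp
    apply conjEx hE' hG
    have huval : E * FM.mk 0 0 0 1 + (1 - E) * (1 - FM.mk 0 0 0 1) =
        FM.mk (1 - E.a) E.b (-E.c) E.d := by
      ext <;> simp [FM.sub_a, FM.sub_b, FM.sub_c, FM.sub_d]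
    rw [huval]
    exact FM.isUnit_of_diag hs _ (locOneSub ha) hd
  · -- neither is a unit : 1 - E is a unit and E = 0
    have h1E : IsUnit (1 - E) := by
      apply FM.isUnit_of_diag hs
      · rw [FM.sub_a, FM.one_a]; exact locOneSub ha
      · rw [FM.sub_d, FM.one_d]; exact locOneSub hd
    obtain ⟨v, hv⟩ := h1E
    have hEz : E = 0 := by
      have hE0 : E * (1 - E) = 0 := by rw [mul_sub, mul_one, hE', sub_self]
      calc E = E * ((1 - E) * ((v⁻¹ : (FM R s)ˣ) : FM R s)) := by
            rw [← hv, v.mul_inv, mul_one]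
        _ = (E * (1 - E)) * ((v⁻¹ : (FM R s)ˣ) : FM R s) := by rw [mul_assoc]
        _ = 0 := by rw [hE0, zero_mul]
    exact absurd hEz h0
end
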